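/- Let m, m' > 0 with m ≠ m', and let g > 0. Then CE(g, m) = CE(g, m') if and only if g = H(g*(m), g*(m')), where H denotes the harmonic mean. Equivalently, an agent with risk type g is indifferent between decisions m and m' exactly when g equals 2(μ−r)/(σ²(m + m')). -/

import Mathlib

open Real

/-- An agent with risk type `g` is indifferent between two distinct decisions
`m, m' > 0` iff `g` is the harmonic mean of the risk types `g*(m)` and `g*(m')`
for which these decisions are individually optimal; equivalently iff
`g = 2(μ−r)/(σ²(m+m'))`. -/
theorem stmt_5 (r μ σ T : ℝ) (hr : 0 < r) (hμ : r < μ) (hσ : 0 < σ) (hT : 0 < T)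
    (CE : ℝ → ℝ → ℝ)
    (hCE : ∀ γ m : ℝ, CE γ m =
      exp (r * T + (μ - r) * m * T - (1/2) * γ * m^2 * σ^2 * T))
    (gstar : ℝ → ℝ) (hgstar : ∀ m : ℝ, gstar m = (μ - r) / (m * σ^2))
    (H : ℝ → ℝ → ℝ) (hH : ∀ x y : ℝ, H x y = 2 / (1/x + 1/y))
    (m m' g : ℝ) (hm : 0 < m) (hm' : 0 < m') (hmm : m ≠ m') (hg : 0 < g) :
    (CE g m = CE g m' ↔ g = H (gstar m) (gstar m')) ∧
    (CE g m = CE g m' ↔ g = 2 * (μ - r) / (σ^2 * (m + m'))) := by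
  have hμr : μ - r ≠ 0 := by linarith
  have hσ2 : σ^2 ≠ 0 := pow_ne_zero 2 hσ.ne'
  have hsum : m + m' ≠ 0 := by positivity
  have hd : m - m' ≠ 0 := sub_ne_zero.mpr hmm
  have key : CE g m = CE g m' ↔ g = 2 * (μ - r) / (σ^2 * (m + m')) := by
    rw [hCE, hCE, Real.exp_eq_exp]
    constructor
    · intro h
      have h' : T * ((m - m') * (g * (σ^2 * (m + m')) - 2 * (μ - r))) = 0 := by
        linear_combination (-2) * h
      rcases mul_eq_zero.mp h' with h1 | h1
      · exact absurd h1 hT.ne'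
      rcases mul_eq_zero.mp h1 with h2 | h2
      · exact absurd h2 hd
      rw [eq_div_iff (mul_ne_zero hσ2 hsum)]
      linarith
    · intro h
      rw [h]
      field_simp
      ring
  have hHeq : H (gstar m) (gstar m') = 2 * (μ - r) / (σ^2 * (m + m')) := by
    rw [hH, hgstar, hgstar, one_div_div, one_div_div, ← add_div,
      div_div_eq_mul_div, show m * σ^2 + m' * σ^2 = σ^2 * (m + m') from by ring]
  exact ⟨by rw [hHeq]; exact key, key⟩
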